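/- Suppose 𝕋 = ℝ and let M ⊆ E be a chain component of the continuous-time flow φ. For any c > 0, the Morse spectrum of M for (φ, a) coincides with the Morse spectrum of M computed for the discretized flow, namely the discrete-time flow (n, x) ↦ (cn)·x (n ∈ ℤ) together with the restricted cocycle a restricted to cℤ × E, where in the discretized Morse spectrum the chains are required to have all times t_i in c·ℤ with t_i ≥ T. -/

import Mathlib

open Filter Topology

section

variable {E : Type*} [MetricSpace E] [CompactSpace E]
variable {V : Type*} [NormedAddCommGroup V] [NormedSpace ℝ V] [FiniteDimensional ℝ V]

/-- `a` is a continuous `V`-valued cocycle over the flow `φ`. -/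
def IsAddCocycle (φ : Flow ℝ E) (a : ℝ → E → V) : Prop :=
  Continuous (fun p : ℝ × E => a p.1 p.2) ∧
    ∀ t s x, a (t + s) x = a t (φ s x) + a s x

/-- `(N, x, t)` is an `(ε, T)`-chain of the flow `φ` from `p` to `q`:
points `x 0 = p, x 1, …, x N = q` and times `t 0, …, t (N-1)` with `t i ≥ T`
and `dist (φ (t i) (x i)) (x (i+1)) < ε`. -/
def IsFlowChain (φ : Flow ℝ E) (ε T : ℝ) (N : ℕ) (x : ℕ → E) (t : ℕ → ℝ) (p q : E) : Prop :=
  0 < N ∧ x 0 = p ∧ x N = q ∧ (∀ i < N, T ≤ t i) ∧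
    ∀ i < N, dist (φ (t i) (x i)) (x (i + 1)) < ε

/-- The finite-time Morse exponent of a chain:
`(1 / (t 0 + ⋯ + t (N-1))) • (a (t 0) (x 0) + ⋯ + a (t (N-1)) (x (N-1)))`. -/
noncomputable def chainExp (a : ℝ → E → V) (N : ℕ) (x : ℕ → E) (t : ℕ → ℝ) : V :=
  (∑ i ∈ Finset.range N, t i)⁻¹ • ∑ i ∈ Finset.range N, a (t i) (x i)

/-- The Morse spectrum of `M ⊆ E`: intersection over `ε, T > 0` of the closures
of the sets of finite-time Morse exponents of `(ε,T)`-chains belonging to `M`. -/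
noncomputable def morseSpec (φ : Flow ℝ E) (a : ℝ → E → V) (M : Set E) : Set V :=
  ⋂ (ε : ℝ) (_ : 0 < ε) (T : ℝ) (_ : 0 < T), closure
    {v | ∃ N x t, ∃ p ∈ M, ∃ q ∈ M, IsFlowChain φ ε T N x t p q ∧ v = chainExp a N x t}

/-- `M` is chain transitive: any two points of `M` are joined by `(ε,T)`-chains
for all `ε, T > 0`. -/
def IsChainTransitiveSet (φ : Flow ℝ E) (M : Set E) : Prop :=
  ∀ p ∈ M, ∀ q ∈ M, ∀ ε > (0:ℝ), ∀ T > (0:ℝ), ∃ N x t, IsFlowChain φ ε T N x t p q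

/-- A chain component is a maximal chain transitive subset. -/
def IsChainComponent (φ : Flow ℝ E) (M : Set E) : Prop :=
  IsChainTransitiveSet φ M ∧
    ∀ M' : Set E, IsChainTransitiveSet φ M' → M ⊆ M' → M = M'


/-- The Morse spectrum of `M` computed with chains of the discretized flow
`(n, x) ↦ (c * n) • x`, i.e. with all chain times lying in `c • ℤ`. -/
noncomputable def morseSpecDisc (φ : Flow ℝ E) (a : ℝ → E → V) (c : ℝ) (M : Set E) : Set V :=
  ⋂ (ε : ℝ) (_ : 0 < ε) (T : ℝ) (_ : 0 < T), closure
    {v | ∃ N x t, ∃ p ∈ M, ∃ q ∈ M, IsFlowChain φ ε T N x t p q ∧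
      (∀ i < N, ∃ n : ℤ, t i = c * n) ∧ v = chainExp a N x t}

/-! ### Auxiliary lemmas -/

/-- Uniform continuity of the flow over a compact time interval. -/
private lemma flow_unif (φ : Flow ℝ E) {b ε : ℝ} (hε : 0 < ε) :
    ∃ δ > 0, ∀ s ∈ Set.Icc (0:ℝ) b, ∀ y z : E, dist y z < δ → dist (φ s y) (φ s z) < ε := by
  haveI : CompactSpace (Set.Icc (0:ℝ) b) := isCompact_iff_compactSpace.mp isCompact_Icc
  set F : Set.Icc (0:ℝ) b × E → E := fun p => φ p.1 p.2 with hF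
  have hFc : Continuous F :=
    Flow.continuous φ (continuous_subtype_val.comp continuous_fst) continuous_snd
  have hu : UniformContinuous F := CompactSpace.uniformContinuous_of_continuous hFc
  rw [Metric.uniformContinuous_iff] at hu
  obtain ⟨δ, hδ, h⟩ := hu ε hε
  refine ⟨δ, hδ, fun s hs y z hyz => ?_⟩
  have := h (a := (⟨s, hs⟩, y)) (b := (⟨s, hs⟩, z)) ?_
  · exact this
  · rw [Prod.dist_eq]
    simp only [Subtype.dist_eq, dist_self]
    simpa [max_eq_right dist_nonneg] using hyz

/-- Boundedness of the cocycle over a compact time interval. -/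
private lemma cocycle_bound (φ : Flow ℝ E) (a : ℝ → E → V) (ha : IsAddCocycle φ a) (c : ℝ) :
    ∃ K, 0 ≤ K ∧ ∀ t ∈ Set.Icc (0:ℝ) c, ∀ x, ‖a t x‖ ≤ K := by
  have hcomp : IsCompact ((Set.Icc (0:ℝ) c) ×ˢ (Set.univ : Set E)) :=
    isCompact_Icc.prod isCompact_univ
  have hcont : ContinuousOn (fun p : ℝ × E => ‖a p.1 p.2‖)
      ((Set.Icc (0:ℝ) c) ×ˢ (Set.univ : Set E)) := ha.1.norm.continuousOn
  obtain ⟨K₀, hK₀⟩ := hcomp.bddAbove_image hcont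
  refine ⟨max K₀ 0, le_max_right _ _, fun t ht x => ?_⟩
  refine le_trans ?_ (le_max_left _ _)
  exact hK₀ ⟨(t, x), ⟨ht, Set.mem_univ _⟩, rfl⟩

/-- Linear growth of the cocycle. -/
private lemma cocycle_growth (φ : Flow ℝ E) (a : ℝ → E → V) (ha : IsAddCocycle φ a)
    {c K : ℝ} (hc : 0 < c) (hK0 : 0 ≤ K) (hK : ∀ t ∈ Set.Icc (0:ℝ) c, ∀ x, ‖a t x‖ ≤ K) :
    ∀ t, 0 ≤ t → ∀ x : E, ‖a t x‖ ≤ (t / c + 1) * K := by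
  have key : ∀ n : ℕ, ∀ r ∈ Set.Icc (0:ℝ) c, ∀ x, ‖a (c * n + r) x‖ ≤ (n + 1) * K := by
    intro n
    induction n with
    | zero => intro r hr x; simpa using hK r hr x
    | succ n ih =>
      intro r hr x
      have h1 : (c * (n+1 : ℕ) + r : ℝ) = c + (c * n + r) := by push_cast; ring
      rw [h1, ha.2 c (c * n + r) x]
      calc ‖a c (φ (c * n + r) x) + a (c * n + r) x‖
          ≤ ‖a c (φ (c * n + r) x)‖ + ‖a (c * n + r) x‖ := norm_add_le _ _
        _ ≤ K + (n + 1) * K := add_le_add (hK c ⟨hc.le, le_refl _⟩ _) (ih r hr x)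
        _ = ((n:ℝ) + 1 + 1) * K := by ring
        _ = ((n + 1 : ℕ) + 1 : ℝ) * K := by push_cast; ring
  intro t ht x
  set n : ℕ := ⌊t / c⌋₊ with hn
  have hnle : (n : ℝ) ≤ t / c := Nat.floor_le (by positivity)
  have h2 : (n:ℝ) * c ≤ t := (le_div_iff₀ hc).mp hnle
  have h3 : t < ((n:ℝ) + 1) * c := (div_lt_iff₀ hc).mp (Nat.lt_floor_add_one (t / c))
  have hr0 : 0 ≤ t - c * n := by linarith
  have hrc : t - c * n ≤ c := by linarith
  have h1 : t = c * n + (t - c * n) := by ring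
  calc ‖a t x‖ = ‖a (c * n + (t - c * n)) x‖ := by rw [← h1]
    _ ≤ (n + 1) * K := key n _ ⟨hr0, hrc⟩ x
    _ ≤ (t / c + 1) * K := by nlinarith

/-- Chains can be shifted at both endpoints by nonnegative flow times. -/
private lemma chain_shift (φ : Flow ℝ E) {M : Set E} (hM : IsChainTransitiveSet φ M)
    {s s₁ s₂ : ℝ} (hs₁ : s₁ ∈ Set.Icc 0 s) (hs₂ : s₂ ∈ Set.Icc 0 s)
    {p q : E} (hp : p ∈ M) (hq : q ∈ M) {ε₀ T₀ : ℝ} (hε : 0 < ε₀) (hT : 0 < T₀) :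
    ∃ N x t, IsFlowChain φ ε₀ T₀ N x t (φ s₁ p) (φ s₂ q) := by
  have hs : (0:ℝ) ≤ s := le_trans hs₁.1 hs₁.2
  obtain ⟨δ, hδ0, hδ⟩ := flow_unif φ (b := s) hε
  have hδ'0 : 0 < min δ ε₀ := lt_min hδ0 hε
  obtain ⟨N, x, t, hN, hx0, hxN, hts, hjump⟩ :=
    hM p hp q hq (min δ ε₀) hδ'0 (T₀ + s) (by linarith)
  set x' : ℕ → E := fun i => if i = 0 then φ s₁ p else if i = N then φ s₂ q else x i with hx'
  set t' : ℕ → ℝ := fun i => (t i - (if i = 0 then s₁ else 0)) + (if i = N - 1 then s₂ else 0)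
    with ht'
  refine ⟨N, x', t', hN, by simp [hx'], by simp [hx', hN.ne'], fun i hi => ?_, fun i hi => ?_⟩
  · have h1 := hts i hi
    have h2 := hs₁.1; have h3 := hs₁.2; have h4 := hs₂.1
    simp only [ht']
    split_ifs <;> linarith
  · have hj : dist (φ (t i) (x i)) (x (i + 1)) < min δ ε₀ := hjump i hi
    by_cases hi0 : i = 0 <;> by_cases hiN : i = N - 1
    · -- N = 1
      have hN1 : N = 1 := by omega
      subst hi0; subst hN1
      have et : t' 0 = t 0 - s₁ + s₂ := by simp [ht']
      have ex0 : x' 0 = φ s₁ p := by simp [hx']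
      have ex1 : x' 1 = φ s₂ q := by simp [hx']
      rw [et, ex0, ex1]
      have key : φ (t 0 - s₁ + s₂) (φ s₁ p) = φ s₂ (φ (t 0) p) := by
        rw [← Flow.map_add, show (t 0 - s₁ + s₂ + s₁ : ℝ) = s₂ + t 0 by ring, Flow.map_add]
      rw [key]
      have : dist (φ (t 0) p) q < δ := by
        rw [← hx0]
        have := lt_of_lt_of_le hj (min_le_left _ _)
        rwa [hxN] at this
      exact hδ s₂ hs₂ _ _ this
    · -- i = 0, N ≥ 2
      subst hi0
      have hN2 : 2 ≤ N := by omega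
      have et : t' 0 = t 0 - s₁ := by simp [ht', hiN]
      have ex0 : x' 0 = φ s₁ p := by simp [hx']
      have h1N : (1:ℕ) ≠ N := by omega
      have ex1 : x' 1 = x 1 := by simp [hx', h1N]
      rw [et, ex0, ex1]
      have key : φ (t 0 - s₁) (φ s₁ p) = φ (t 0) (x 0) := by
        rw [← Flow.map_add, show (t 0 - s₁ + s₁ : ℝ) = t 0 by ring, hx0]
      rw [key]
      exact lt_of_lt_of_le hj (min_le_right _ _)
    · -- i = N - 1, i ≠ 0
      have hiN' : i + 1 = N := by omega
      have hiNne : i ≠ N := by omega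
      have hN10 : N - 1 ≠ 0 := by omega
      have hN0 : N ≠ 0 := by omega
      have et : t' i = t i + s₂ := by simp [ht', hi0, hiN, hN10]
      have exi : x' i = x i := by simp [hx', hi0, hiNne]
      have exs : x' (i+1) = φ s₂ q := by simp [hx', hiN', hN0]
      rw [et, exi, exs]
      have key : φ (t i + s₂) (x i) = φ s₂ (φ (t i) (x i)) := by
        rw [show (t i + s₂ : ℝ) = s₂ + t i by ring, Flow.map_add]
      rw [key]
      have : dist (φ (t i) (x i)) q < δ := by
        have := lt_of_lt_of_le hj (min_le_left _ _)
        rwa [hiN', hxN] at this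
      exact hδ s₂ hs₂ _ _ this
    · -- middle
      have hiNne : i ≠ N := by omega
      have hsNe : i + 1 ≠ N := by omega
      have et : t' i = t i := by simp [ht', hi0, hiN]
      have exi : x' i = x i := by simp [hx', hi0, hiNne]
      have exs : x' (i+1) = x (i+1) := by simp [hx', hsNe]
      rw [et, exi, exs]
      exact lt_of_lt_of_le hj (min_le_right _ _)

/-- A chain component is forward invariant. -/
private lemma flow_mem_of_chainComponent (φ : Flow ℝ E) {M : Set E}
    (hM : IsChainComponent φ M) {s : ℝ} (hs : 0 ≤ s) {q : E} (hq : q ∈ M) : φ s q ∈ M := by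
  have htrans : IsChainTransitiveSet φ (M ∪ φ s '' M) := by
    intro u hu w hw ε₀ hε T₀ hT
    have hrep : ∀ v ∈ M ∪ φ s '' M, ∃ s₀ ∈ Set.Icc (0:ℝ) s, ∃ m ∈ M, v = φ s₀ m := by
      rintro v (hv | ⟨m, hm, rfl⟩)
      · exact ⟨0, ⟨le_refl _, hs⟩, v, hv, (φ.map_zero_apply v).symm⟩
      · exact ⟨s, ⟨hs, le_refl _⟩, m, hm, rfl⟩
    obtain ⟨s₁, hs₁, p, hp, rfl⟩ := hrep u hu
    obtain ⟨s₂, hs₂, q', hq', rfl⟩ := hrep w hw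
    exact chain_shift φ hM.1 hs₁ hs₂ hp hq' hε hT
  have heq := hM.2 _ htrans Set.subset_union_left
  rw [heq]
  exact Or.inr ⟨q, hq, rfl⟩

set_option maxHeartbeats 1000000

/-- The Morse spectrum of a chain component of a continuous-time flow coincides
with the Morse spectrum computed for any of its discretizations (restriction of
the flow and of the cocycle to `c • ℤ`, `c > 0`). -/
theorem morseSpec_eq_morseSpecDisc (φ : Flow ℝ E) (a : ℝ → E → V)
    (ha : IsAddCocycle φ a) (M : Set E) (hM : IsChainComponent φ M)
    (c : ℝ) (hc : 0 < c) :
    morseSpec φ a M = morseSpecDisc φ a c M := by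
  apply Set.Subset.antisymm
  · -- continuous spectrum ⊆ discretized spectrum
    intro v hv
    simp only [morseSpec, Set.mem_iInter] at hv
    simp only [morseSpecDisc, Set.mem_iInter]
    intro ε hε T hT
    obtain ⟨K, hK0, hK⟩ := cocycle_bound φ a ha c
    have hgrow := cocycle_growth φ a ha hc hK0 hK
    obtain ⟨δu, hδu0, hδu⟩ := flow_unif φ (b := c) hε
    rw [Metric.mem_closure_iff]
    intro r hr
    set T₁ : ℝ := max (T + c) 1 + (3 + c) * K * (2 / r) + 1 with hT₁def
    have haux : 0 ≤ (3 + c) * K * (2 / r) := by positivity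
    have hT₁c : T + c ≤ T₁ := by
      have h := le_max_left (T + c) 1
      simp only [hT₁def]; linarith
    have hT₁1 : 1 ≤ T₁ := by
      have h := le_max_right (T + c) 1
      simp only [hT₁def]; linarith
    have hT₁pos : 0 < T₁ := lt_of_lt_of_le one_pos hT₁1
    have hT₁bound : (3 + c) * K / T₁ < r / 2 := by
      rw [div_lt_div_iff₀ hT₁pos two_pos]
      have h1 : 1 ≤ max (T+c) 1 := le_max_right _ _
      have h3 : r * T₁ = r * (max (T+c) 1) + (3+c)*K*2 + r := by
        rw [hT₁def]; field_simp
      nlinarith [mul_le_mul_of_nonneg_left h1 hr.le]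
    clear_value T₁
    have hv1 := hv δu hδu0 T₁ hT₁pos
    obtain ⟨w₀, hw₀mem, hvw₀⟩ := Metric.mem_closure_iff.mp hv1 (r/2) (by linarith)
    obtain ⟨N, x, t, p, hp, q, hq, ⟨hN, hx0, hxN, hts, hjump⟩, hw₀⟩ := hw₀mem
    -- ceiling facts
    have hceil : ∀ y : ℝ, y ≤ c * ⌈y / c⌉ := by
      intro y
      have h := Int.le_ceil (y / c)
      calc y = c * (y/c) := by field_simp
        _ ≤ c * ⌈y/c⌉ := mul_le_mul_of_nonneg_left h hc.le
    have hceil2 : ∀ y : ℝ, c * ⌈y / c⌉ < y + c := by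
      intro y
      have h := Int.ceil_lt_add_one (y / c)
      have h2 : c * (⌈y/c⌉:ℝ) < c * (y/c + 1) := by nlinarith
      have h3 : c * (y/c + 1) = y + c := by field_simp
      linarith
    -- the shifts
    set σ : ℕ → ℝ := fun n => Nat.rec (0:ℝ) (fun i si => c * ⌈(t i - si)/c⌉ - t i + si) n with hσdef
    have hσ0 : σ 0 = 0 := rfl
    have hσs : ∀ i, σ (i+1) = c * ⌈(t i - σ i)/c⌉ - t i + σ i := fun i => rfl
    have hσmem : ∀ i, 0 ≤ σ i ∧ σ i < c := by
      intro i
      cases i with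
      | zero => exact ⟨le_refl 0, by rw [hσ0]; exact hc⟩
      | succ i =>
        rw [hσs]
        constructor
        · have := hceil (t i - σ i); linarith
        · have := hceil2 (t i - σ i); linarith
    set t' : ℕ → ℝ := fun i => σ (i+1) + t i - σ i with ht'def
    set x' : ℕ → E := fun i => φ (σ i) (x i) with hx'def
    have ht'eq : ∀ i, t' i = σ (i+1) + t i - σ i := fun i => rfl
    have hx'eq : ∀ i, x' i = φ (σ i) (x i) := fun i => rfl
    clear_value t' x'
    clear_value σ
    have ht'val : ∀ i, t' i = c * ⌈(t i - σ i)/c⌉ := by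
      intro i
      rw [ht'eq, hσs]; ring
    have ht'ge : ∀ i < N, T ≤ t' i := by
      intro i hi
      have h1 := hceil (t i - σ i)
      have h2 := hts i hi
      have h3 := (hσmem i).2
      rw [ht'val i]
      linarith
    have hq' : φ (σ N) q ∈ M := flow_mem_of_chainComponent φ hM (hσmem N).1 hq
    have hchain' : IsFlowChain φ ε T N x' t' p (φ (σ N) q) := by
      refine ⟨hN, ?_, ?_, ht'ge, ?_⟩
      · rw [hx'eq 0, hσ0, hx0]
        exact φ.map_zero_apply p
      · rw [hx'eq N, hxN]
      · intro i hi
        have e3 : t' i + σ i = σ (i+1) + t i := by rw [ht'eq]; ring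
        have key : φ (t' i) (x' i) = φ (σ (i+1)) (φ (t i) (x i)) := by
          calc φ (t' i) (x' i) = φ (t' i) (φ (σ i) (x i)) := by rw [hx'eq]
            _ = φ (t' i + σ i) (x i) := (φ.map_add _ _ _).symm
            _ = φ (σ (i+1) + t i) (x i) := by rw [e3]
            _ = φ (σ (i+1)) (φ (t i) (x i)) := φ.map_add _ _ _
        rw [key, hx'eq (i+1)]
        exact hδu (σ (i+1)) ⟨(hσmem (i+1)).1, (hσmem (i+1)).2.le⟩ _ _ (hjump i hi)
    have hdisc : ∀ i < N, ∃ n : ℤ, t' i = c * n := fun i _ => ⟨⌈(t i - σ i)/c⌉, ht'val i⟩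
    -- sums
    set S := ∑ i ∈ Finset.range N, t i with hSdef
    set S' := ∑ i ∈ Finset.range N, t' i with hS'def
    set A := ∑ i ∈ Finset.range N, a (t i) (x i) with hAdef
    set A' := ∑ i ∈ Finset.range N, a (t' i) (x' i) with hA'def
    clear_value S S' A A'
    have hS'S : S' = S + σ N := by
      have h1 : S' - S = ∑ i ∈ Finset.range N, (t' i - t i) := by
        rw [hS'def, hSdef]; exact (Finset.sum_sub_distrib _ _).symm
      have h2 : ∀ i, t' i - t i = σ (i+1) - σ i := by
        intro i; rw [ht'eq]; ring
      simp only [h2] at h1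
      rw [Finset.sum_range_sub σ N] at h1
      rw [hσ0] at h1
      linarith
    have hterm : ∀ i, a (t' i) (x' i) - a (t i) (x i)
        = a (σ (i+1)) (φ (t i) (x i)) - a (σ i) (x i) := by
      intro i
      have e1 : a (t' i + σ i) (x i) = a (t' i) (φ (σ i) (x i)) + a (σ i) (x i) := ha.2 _ _ _
      have e2 : a (σ (i+1) + t i) (x i) = a (σ (i+1)) (φ (t i) (x i)) + a (t i) (x i) :=
        ha.2 _ _ _
      have e3 : t' i + σ i = σ (i+1) + t i := by rw [ht'eq]; ring
      rw [e3, e2] at e1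
      rw [hx'eq i]
      have e5 := eq_sub_of_add_eq e1.symm
      rw [e5]; abel
    have hAA' : ‖A' - A‖ ≤ (N:ℝ) * (2*K) := by
      have h1 : A' - A = ∑ i ∈ Finset.range N, (a (t' i) (x' i) - a (t i) (x i)) := by
        rw [hA'def, hAdef]; exact (Finset.sum_sub_distrib _ _).symm
      have hstep : ∀ i ∈ Finset.range N, ‖a (t' i) (x' i) - a (t i) (x i)‖ ≤ 2*K := by
        intro i _
        rw [hterm i]
        calc ‖a (σ (i+1)) (φ (t i) (x i)) - a (σ i) (x i)‖
            ≤ ‖a (σ (i+1)) (φ (t i) (x i))‖ + ‖a (σ i) (x i)‖ := norm_sub_le _ _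
          _ ≤ K + K := add_le_add
              (hK (σ (i+1)) ⟨(hσmem (i+1)).1, (hσmem (i+1)).2.le⟩ (φ (t i) (x i)))
              (hK (σ i) ⟨(hσmem i).1, (hσmem i).2.le⟩ (x i))
          _ = 2*K := by ring
      calc ‖A' - A‖ = ‖∑ i ∈ Finset.range N, (a (t' i) (x' i) - a (t i) (x i))‖ := by rw [h1]
        _ ≤ ∑ i ∈ Finset.range N, ‖a (t' i) (x' i) - a (t i) (x i)‖ := norm_sum_le _ _
        _ ≤ ∑ _i ∈ Finset.range N, (2*K) := Finset.sum_le_sum hstep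
        _ = (N:ℝ) * (2*K) := by
            rw [Finset.sum_const, Finset.card_range, nsmul_eq_mul]
    have hAbound : ‖A‖ ≤ (S / c + N) * K := by
      calc ‖A‖ ≤ ∑ i ∈ Finset.range N, ‖a (t i) (x i)‖ := by
            rw [hAdef]; exact norm_sum_le _ _
        _ ≤ ∑ i ∈ Finset.range N, (t i / c + 1) * K := by
            refine Finset.sum_le_sum fun i hi => ?_
            have := hts i (Finset.mem_range.mp hi)
            exact hgrow (t i) (by linarith) (x i)
        _ = (S / c + N) * K := by
            simp only [show ∀ y:ℝ, (y / c + 1) * K = y * (K/c) + K from fun y => by ring]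
            rw [Finset.sum_add_distrib, ← Finset.sum_mul, Finset.sum_const, Finset.card_range,
              nsmul_eq_mul, hSdef]
            ring
    have hNR : (1:ℝ) ≤ (N:ℝ) := by exact_mod_cast hN
    have hNpos : (0:ℝ) < (N:ℝ) := by linarith
    have hNT₁S : (N:ℝ) * T₁ ≤ S := by
      rw [hSdef]
      calc (N:ℝ) * T₁ = ∑ _i ∈ Finset.range N, T₁ := by
            rw [Finset.sum_const, Finset.card_range, nsmul_eq_mul]
        _ ≤ ∑ i ∈ Finset.range N, t i :=
            Finset.sum_le_sum fun i hi => hts i (Finset.mem_range.mp hi)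
    have hSpos : 0 < S := lt_of_lt_of_le (by nlinarith) hNT₁S
    have hS'ge : S ≤ S' := by rw [hS'S]; linarith [(hσmem N).1]
    have hS'pos : 0 < S' := lt_of_lt_of_le hSpos hS'ge
    have hS'le : S' ≤ S + c := by rw [hS'S]; linarith [(hσmem N).2]
    have hT₁S' : T₁ ≤ S' := by nlinarith
    have hS'1 : 1 ≤ S' := le_trans hT₁1 hT₁S'
    -- bound on the difference of exponents
    have hdistexp : dist (chainExp a N x t) (chainExp a N x' t') < r/2 := by
      have e : dist (chainExp a N x t) (chainExp a N x' t') = ‖S⁻¹ • A - S'⁻¹ • A'‖ := by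
        rw [dist_eq_norm]
        simp only [chainExp, hSdef, hAdef, hS'def, hA'def]
      rw [e]
      have hdecomp : S⁻¹ • A - S'⁻¹ • A' = -(S'⁻¹ • (A' - A)) + (S⁻¹ - S'⁻¹) • A := by
        rw [smul_sub, sub_smul]; abel
      rw [hdecomp]
      have hb1 : ‖S'⁻¹ • (A' - A)‖ ≤ 2*K/T₁ := by
        rw [norm_smul, Real.norm_eq_abs, abs_of_pos (inv_pos.mpr hS'pos)]
        have h1 : S'⁻¹ ≤ ((N:ℝ)*T₁)⁻¹ := by
          apply inv_anti₀ (by positivity) (le_trans hNT₁S hS'ge)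
        have hNne : (N:ℝ) ≠ 0 := ne_of_gt hNpos
        have hT₁ne : T₁ ≠ 0 := ne_of_gt hT₁pos
        calc S'⁻¹ * ‖A' - A‖ ≤ ((N:ℝ)*T₁)⁻¹ * ((N:ℝ)*(2*K)) :=
              mul_le_mul h1 hAA' (norm_nonneg _) (by positivity)
          _ = 2*K/T₁ := by
              field_simp
      have hb2 : ‖(S⁻¹ - S'⁻¹) • A‖ ≤ (1+c)*K/T₁ := by
        rw [norm_smul, Real.norm_eq_abs]
        have hD : S⁻¹ - S'⁻¹ = (S' - S)/(S*S') := by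
          rw [inv_eq_one_div, inv_eq_one_div,
            div_sub_div _ _ hSpos.ne' hS'pos.ne', one_mul, mul_one]
        have hDnn : 0 ≤ S⁻¹ - S'⁻¹ := by
          rw [hD]
          apply div_nonneg (by linarith) (by positivity)
        rw [abs_of_nonneg hDnn, hD]
        have hσc : S' - S ≤ c := by linarith
        calc (S'-S)/(S*S') * ‖A‖ ≤ c/(S*S') * ((S/c + N)*K) := by
              apply mul_le_mul _ hAbound (norm_nonneg _) (by positivity)
              exact (div_le_div_iff_of_pos_right (by positivity)).mpr hσc
          _ = (S + c*(N:ℝ))*K/(S*S') := by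
              field_simp
          _ ≤ (1+c)*K/T₁ := by
              rw [div_le_div_iff₀ (by positivity) hT₁pos]
              nlinarith [mul_le_mul_of_nonneg_left hNT₁S hc.le,
                mul_le_mul_of_nonneg_left hT₁S' hSpos.le,
                mul_nonneg hK0 hSpos.le, mul_nonneg (mul_nonneg hc.le hK0) hSpos.le,
                mul_le_mul_of_nonneg_left hS'1 (mul_nonneg (mul_nonneg hc.le hK0) hSpos.le)]
      calc ‖-(S'⁻¹ • (A' - A)) + (S⁻¹ - S'⁻¹) • A‖
          ≤ ‖-(S'⁻¹ • (A' - A))‖ + ‖(S⁻¹ - S'⁻¹) • A‖ := norm_add_le _ _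
        _ = ‖S'⁻¹ • (A' - A)‖ + ‖(S⁻¹ - S'⁻¹) • A‖ := by rw [norm_neg]
        _ ≤ 2*K/T₁ + (1+c)*K/T₁ := add_le_add hb1 hb2
        _ = (3+c)*K/T₁ := by ring
        _ < r/2 := hT₁bound
    refine ⟨chainExp a N x' t', ⟨N, x', t', p, hp, φ (σ N) q, hq', hchain', hdisc, rfl⟩, ?_⟩
    calc dist v (chainExp a N x' t')
        ≤ dist v w₀ + dist w₀ (chainExp a N x' t') := dist_triangle _ _ _
      _ < r/2 + r/2 := add_lt_add hvw₀ (by rw [hw₀]; exact hdistexp)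
      _ = r := by ring
  · -- discretized spectrum ⊆ continuous spectrum
    intro v hv
    simp only [morseSpec, morseSpecDisc, Set.mem_iInter] at hv ⊢
    intro ε hε T hT
    refine closure_mono ?_ (hv ε hε T hT)
    rintro w ⟨N, x, t, p, hp, q, hq, hch, _, hw⟩
    exact ⟨N, x, t, p, hp, q, hq, hch, hw⟩

end
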